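/- If a symmetric 2-covariant tensor T on an n-dimensional Lorentzian vector space has the dominant property and admits n linearly independent null eigenvectors, then T = λ g for some λ ≥ 0. -/
import Mathlib


/-- The Minkowski inner product of signature (+,-,...,-) on `Fin (n+1) → ℝ`. -/
def mink (n : ℕ) (v w : Fin (n + 1) → ℝ) : ℝ :=
  v 0 * w 0 - ∑ i : Fin n, v i.succ * w i.succ

/-- Causal future-directed vector. -/
def causalFD (n : ℕ) (v : Fin (n + 1) → ℝ) : Prop :=
  0 ≤ mink n v v ∧ 0 < v 0

lemma mink_comm (n : ℕ) (v w : Fin (n + 1) → ℝ) : mink n v w = mink n w v := by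
  simp [mink, mul_comm]

/-- The Minkowski form as a bilinear map. -/
noncomputable def minkL (n : ℕ) :
    (Fin (n + 1) → ℝ) →ₗ[ℝ] (Fin (n + 1) → ℝ) →ₗ[ℝ] ℝ :=
  LinearMap.mk₂ ℝ (mink n)
    (by intro v v' w; simp [mink, add_mul, Finset.sum_add_distrib]; ring)
    (by intro c v w
        simp only [mink, Pi.smul_apply, smul_eq_mul, mul_sub, Finset.mul_sum, mul_assoc])
    (by intro v w w'; simp [mink, mul_add, Finset.sum_add_distrib]; ring)
    (by intro c v w
        simp only [mink, Pi.smul_apply, smul_eq_mul, mul_sub, Finset.mul_sum]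
        congr 1
        · ring
        · exact Finset.sum_congr rfl (fun i _ => by ring))

lemma null_time_ne_zero {n : ℕ} {u : Fin (n + 1) → ℝ}
    (hu : mink n u u = 0) (hu0 : u ≠ 0) : u 0 ≠ 0 := by
  intro h0
  apply hu0
  have hsum : ∑ i : Fin n, u i.succ * u i.succ = 0 := by
    have := hu; simp [mink, h0] at this; linarith [this]
  have hz : ∀ i ∈ Finset.univ, u (Fin.succ i) * u (Fin.succ i) = 0 := by
    rw [← Finset.sum_eq_zero_iff_of_nonneg]
    · exact hsum
    · intro i _; exact mul_self_nonneg _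
  funext j
  rcases Fin.eq_zero_or_eq_succ j with rfl | ⟨i, rfl⟩
  · exact h0
  · have := hz i (Finset.mem_univ i)
    have := mul_self_eq_zero.mp this
    simpa using this

/-- Two orthogonal null vectors are proportional. -/
lemma null_orthogonal_prop {n : ℕ} {u v : Fin (n + 1) → ℝ}
    (hu : mink n u u = 0) (hv : mink n v v = 0) (huv : mink n u v = 0)
    (hu0 : u ≠ 0) : ∃ r : ℝ, v = r • u := by
  have ht : u 0 ≠ 0 := null_time_ne_zero hu hu0
  set r : ℝ := v 0 / u 0 with hr
  refine ⟨r, ?_⟩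
  have hsu : ∑ i : Fin n, u i.succ * u i.succ = u 0 * u 0 := by
    simp [mink] at hu; linarith
  have hsv : ∑ i : Fin n, v i.succ * v i.succ = v 0 * v 0 := by
    simp [mink] at hv; linarith
  have hsuv : ∑ i : Fin n, u i.succ * v i.succ = u 0 * v 0 := by
    simp [mink] at huv; linarith
  have hkey : ∑ i : Fin n, (v i.succ - r * u i.succ) * (v i.succ - r * u i.succ) = 0 := by
    have expand : ∀ i : Fin n,
        (v i.succ - r * u i.succ) * (v i.succ - r * u i.succ)
        = v i.succ * v i.succ - 2 * r * (u i.succ * v i.succ)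
          + r * r * (u i.succ * u i.succ) := by intro i; ring
    rw [Finset.sum_congr rfl (fun i _ => expand i)]
    rw [Finset.sum_add_distrib, Finset.sum_sub_distrib, ← Finset.mul_sum, ← Finset.mul_sum]
    rw [hsu, hsv, hsuv, hr]
    field_simp
    ring
  have hz : ∀ i ∈ (Finset.univ : Finset (Fin n)),
      (v i.succ - r * u i.succ) * (v i.succ - r * u i.succ) = 0 := by
    rw [← Finset.sum_eq_zero_iff_of_nonneg]
    · exact hkey
    · intro i _; exact mul_self_nonneg _
  funext j
  rcases Fin.eq_zero_or_eq_succ j with rfl | ⟨i, rfl⟩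
  · simp [hr]; field_simp
  · have := mul_self_eq_zero.mp (hz i (Finset.mem_univ i))
    have : v i.succ = r * u i.succ := by linarith
    simpa using this

/-- a symmetric tensor with the dominant property admitting `n + 1`
    (the dimension) linearly independent null eigenvectors is a nonnegative multiple
    of the metric. -/
theorem dominant_with_max_null_eigenvectors_is_conformal (n : ℕ) (hn : 1 ≤ n)
    (T : (Fin (n + 1) → ℝ) →ₗ[ℝ] (Fin (n + 1) → ℝ) →ₗ[ℝ] ℝ)
    (hsymm : ∀ v w, T v w = T w v)
    (hT : ∀ k₁ k₂, causalFD n k₁ → causalFD n k₂ → 0 ≤ T k₁ k₂)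
    (X : Fin (n + 1) → Fin (n + 1) → ℝ) (hli : LinearIndependent ℝ X)
    (hnull : ∀ k, mink n (X k) (X k) = 0 ∧ X k ≠ 0)
    (heig : ∀ k, ∃ lam : ℝ, ∀ a, T a (X k) = lam * mink n a (X k)) :
    ∃ lam : ℝ, 0 ≤ lam ∧ ∀ v w, T v w = lam * mink n v w := by
  classical
  choose lamf hlamf using heig
  -- distinct eigenvectors are not orthogonal
  have hnotprop : ∀ j k : Fin (n + 1), j ≠ k → ∀ r : ℝ, X k ≠ r • X j := by
    intro j k hjk r hv
    have hsum : ∑ i : Fin (n + 1),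
        (if i = k then (1 : ℝ) else if i = j then -r else 0) • X i = 0 := by
      have : ∀ i : Fin (n + 1),
          (if i = k then (1 : ℝ) else if i = j then -r else 0) • X i
          = (if i = k then X i else 0) + (if i = j then (-r) • X i else 0) := by
        intro i
        by_cases h1 : i = k <;> by_cases h2 : i = j <;>
          simp [h1, h2] at * <;> first | rfl | (exact absurd (h1 ▸ h2) hjk.symm) | simp_all
      rw [Finset.sum_congr rfl (fun i _ => this i), Finset.sum_add_distrib]
      simp [Finset.sum_ite_eq', hv]
    have := Fintype.linearIndependent_iff.mp hli _ hsum k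
    simp at this
  have hortho : ∀ j k : Fin (n + 1), j ≠ k → mink n (X j) (X k) ≠ 0 := by
    intro j k hjk h0
    obtain ⟨r, hr⟩ := null_orthogonal_prop (hnull j).1 (hnull k).1 h0 (hnull j).2
    exact hnotprop j k hjk r hr
  -- all eigenvalues coincide
  have hlam_eq : ∀ j k : Fin (n + 1), lamf j = lamf k := by
    intro j k
    by_cases hjk : j = k
    · rw [hjk]
    · have h1 : T (X k) (X j) = lamf j * mink n (X k) (X j) := hlamf j (X k)
      have h2 : T (X j) (X k) = lamf k * mink n (X j) (X k) := hlamf k (X j)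
      rw [hsymm (X k) (X j), h2, mink_comm n (X j) (X k)] at h1
      exact (mul_right_cancel₀ (hortho k j (Ne.symm hjk)) h1).symm
  set lam := lamf 0 with hlamdef
  have heig' : ∀ k a, T a (X k) = lam * mink n a (X k) := by
    intro k a
    rw [hlamf k a, hlam_eq k 0]
  -- X is a basis
  have hcard : Fintype.card (Fin (n + 1)) = Module.finrank ℝ (Fin (n + 1) → ℝ) := by
    simp [Module.finrank_fin_fun]
  let B := basisOfLinearIndependentOfCardEqFinrank hli hcard
  have hB : ⇑B = X := coe_basisOfLinearIndependentOfCardEqFinrank hli hcard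
  have hTall : ∀ v w, T v w = lam * mink n v w := by
    intro v w
    have : T v = lam • (minkL n v) := by
      apply Module.Basis.ext B
      intro i
      rw [hB]
      simp [minkL, heig' i v]
    rw [this]
    simp [minkL]
  refine ⟨lam, ?_, hTall⟩
  -- nonnegativity
  set u := X 0 with hu
  have ht : u 0 ≠ 0 := null_time_ne_zero (hnull 0).1 (hnull 0).2
  set e0 : Fin (n + 1) → ℝ := fun j => if j = 0 then 1 else 0 with he0
  have he0c : causalFD n e0 := by
    constructor
    · simp [mink, he0, Fin.succ_ne_zero]
    · simp [he0]
  have hminke0 : ∀ w : Fin (n + 1) → ℝ, mink n e0 w = w 0 := by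
    intro w; simp [mink, he0, Fin.succ_ne_zero]
  rcases lt_or_gt_of_ne ht with hneg | hpos
  · -- u 0 < 0 : use -u
    have hc : causalFD n (-u) := by
      constructor
      · have h : mink n (-u) (-u) = mink n u u := by simp [mink]
        rw [h, (hnull 0).1]
      · simp; linarith
    have h1 : 0 ≤ T e0 (-u) := hT e0 (-u) he0c hc
    have h2 : T e0 (-u) = -(lam * u 0) := by
      have : T e0 (-u) = -(T e0 u) := by simp
      rw [this, heig' 0 e0, hminke0]
    rw [h2] at h1
    nlinarith
  · have hc : causalFD n u := ⟨le_of_eq (hnull 0).1.symm, hpos⟩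
    have h1 : 0 ≤ T e0 u := hT e0 u he0c hc
    have h2 : T e0 u = lam * u 0 := by rw [heig' 0 e0, hminke0]
    rw [h2] at h1
    nlinarith
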